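/- Let X be a metric space, let A ⊆ X and let C ⊆ A be a countable set. Then there exists a closed separable set Y ⊆ X with C ⊆ Y such that for every x ∈ C: if A is not lower porous at x in X, then A ∩ Y is not lower porous at x in the metric subspace Y. -/

import Mathlib

open Metric Filter Set Topology TopologicalSpace NNReal ENNReal

/-- `porosityGamma A x R` is the supremum of all radii `r ≥ 0` for which there exists `z`
with the open ball `U(z,r)` contained in `U(x,R) \ A`. -/
noncomputable def porosityGamma {X : Type*} [MetricSpace X] (A : Set X) (x : X) (R : ℝ) :
    ℝ≥0∞ :=
  ⨆ (r : ℝ≥0) (_ : ∃ z : X, Metric.ball z (r : ℝ) ⊆ Metric.ball x R \ A), (r : ℝ≥0∞)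

/-- `A` is lower porous at `x` if `liminf_{R→0+} γ(x,R,A)/R > 0`. -/
def LowerPorousAt {X : Type*} [MetricSpace X] (A : Set X) (x : X) : Prop :=
  0 < Filter.liminf (fun R : ℝ => porosityGamma A x R / ENNReal.ofReal R) (𝓝[>] (0 : ℝ))

/-- `A` is lower porous if it is lower porous at each of its points. -/
def LowerPorous {X : Type*} [MetricSpace X] (A : Set X) : Prop :=
  ∀ x ∈ A, LowerPorousAt A x

/-- `A` is σ-lower porous if it is a countable union of lower porous sets. -/
def SigmaLowerPorous {X : Type*} [MetricSpace X] (A : Set X) : Prop :=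
  ∃ B : ℕ → Set X, (∀ n, LowerPorous (B n)) ∧ A = ⋃ n, B n

/-- Separable reduction of non-lower-porosity at the points of a countable subset. -/
theorem not_lowerPorousAt_separable_reduction {X : Type*} [MetricSpace X]
    (A C : Set X) (hCA : C ⊆ A) (hC : C.Countable) :
    ∃ Y : Set X, IsClosed Y ∧ TopologicalSpace.IsSeparable Y ∧ C ⊆ Y ∧
      ∀ (x : X) (hx : x ∈ Y), x ∈ C →
        ¬ LowerPorousAt A x →
          ¬ LowerPorousAt ((Subtype.val ⁻¹' A) : Set Y) (⟨x, hx⟩ : Y) := by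
  classical
  set w : X → ℚ → X := fun z q =>
    if h : (Metric.ball z (q : ℝ) ∩ A).Nonempty then h.choose else z with hw_def
  have hw : ∀ (z : X) (q : ℚ), (Metric.ball z (q : ℝ) ∩ A).Nonempty →
      w z q ∈ Metric.ball z (q : ℝ) ∩ A := by
    intro z q h
    simp only [hw_def, dif_pos h]
    exact h.choose_spec
  let D : ℕ → Set X := fun n =>
    Nat.rec C (fun _ Dn => Dn ∪ ⋃ q : ℚ, (fun z => w z q) '' Dn) n
  have hDc : ∀ n, (D n).Countable := by
    intro n
    induction n with
    | zero => exact hC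
    | succ n ih => exact ih.union (countable_iUnion fun q => ih.image _)
  set S : Set X := ⋃ n, D n with hS_def
  have hSc : S.Countable := countable_iUnion hDc
  have hCS : C ⊆ S := fun y hy => mem_iUnion.2 ⟨0, hy⟩
  have hwS : ∀ z ∈ S, ∀ q : ℚ, w z q ∈ S := by
    intro z hz q
    rcases mem_iUnion.1 hz with ⟨n, hn⟩
    exact mem_iUnion.2 ⟨n + 1, Or.inr (mem_iUnion.2 ⟨q, ⟨z, hn, rfl⟩⟩)⟩
  refine ⟨closure S, isClosed_closure, hSc.isSeparable.closure,
    hCS.trans subset_closure, ?_⟩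
  intro x hx hxC hnp hY
  have hxA : x ∈ A := hCA hxC
  -- key inequality
  have key : ∀ R : ℝ, 0 < R →
      porosityGamma ((Subtype.val ⁻¹' A) : Set (closure S)) (⟨x, hx⟩ : closure S) R ≤
        porosityGamma A x (2 * R) := by
    intro R hR
    simp only [porosityGamma]
    refine iSup₂_le ?_
    rintro r ⟨z, hz⟩
    rcases eq_or_lt_of_le (zero_le : (0 : ℝ≥0) ≤ r) with h0 | hrpos
    · simp [← h0]
    have hrpos' : (0 : ℝ) < r := hrpos
    have hzball : dist (z : X) x < R := by
      have hzmem : z ∈ Metric.ball (⟨x, hx⟩ : closure S) R \ (Subtype.val ⁻¹' A) :=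
        hz (by simpa using hrpos')
      simpa [Metric.mem_ball, Subtype.dist_eq] using hzmem.1
    have hxz : (r : ℝ) ≤ dist x (z : X) := by
      by_contra hlt
      push_neg at hlt
      have hxmem : (⟨x, hx⟩ : closure S) ∈ Metric.ball z (r : ℝ) := by
        simpa [Metric.mem_ball, Subtype.dist_eq] using hlt
      exact (hz hxmem).2 hxA
    have hrR : (r : ℝ) < R := hxz.trans_lt (by rwa [dist_comm])
    refine ENNReal.le_of_forall_nnreal_lt ?_
    intro s hs
    have hsr : (s : ℝ) < r := by exact_mod_cast hs
    set ε : ℝ := ((r : ℝ) - s) / 3 with hε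
    have hεpos : 0 < ε := by
      have : (0 : ℝ) < (r : ℝ) - s := sub_pos.2 hsr
      positivity
    rcases Metric.mem_closure_iff.1 z.2 ε hεpos with ⟨z', hz'S, hzz'⟩
    refine le_iSup₂_of_le s ⟨z', ?_⟩ le_rfl
    intro y hy
    have hyz' : dist y z' < s := by simpa [Metric.mem_ball] using hy
    constructor
    · have h4 : dist y x ≤ dist y z' + dist z' (z : X) + dist (z : X) x := dist_triangle4 _ _ _ _
      have : dist y x < s + ε + R := by
        have := dist_comm (z : X) z' ▸ hzz'
        linarith [hyz', hzball, h4]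
      have hsε : (s : ℝ) + ε < R := by
        have : (s : ℝ) + ε < r := by rw [hε]; linarith
        linarith
      simp only [Metric.mem_ball]
      linarith
    · intro hyA
      have hsre : (s : ℝ) < (r : ℝ) - ε := by rw [hε]; linarith
      obtain ⟨q, hq1, hq2⟩ := exists_rat_btwn hsre
      have hne : (Metric.ball z' (q : ℝ) ∩ A).Nonempty :=
        ⟨y, by simpa [Metric.mem_ball] using hyz'.trans hq1, hyA⟩
      have ha := hw z' q hne
      have haS : w z' q ∈ S := hwS z' hz'S q
      have haY : w z' q ∈ closure S := subset_closure haS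
      have hmem : (⟨w z' q, haY⟩ : closure S) ∈ Metric.ball z (r : ℝ) := by
        have h1 : dist (w z' q) z' < q := by simpa [Metric.mem_ball] using ha.1
        have h2 : dist z' (z : X) < ε := by rwa [dist_comm] at hzz'
        have : dist (w z' q) (z : X) < r := by
          have := dist_triangle (w z' q) z' (z : X)
          linarith
        simpa [Metric.mem_ball, Subtype.dist_eq] using this
      exact (hz hmem).2 ha.2
  -- filter part
  have htend : ∀ c : ℝ, 0 < c →
      Tendsto (fun R : ℝ => c * R) (𝓝[>] (0 : ℝ)) (𝓝[>] (0 : ℝ)) := by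
    intro c hc
    rw [tendsto_nhdsWithin_iff]
    constructor
    · have h1 : Tendsto (fun R : ℝ => c * R) (𝓝 0) (𝓝 (c * 0)) :=
        (continuous_const.mul continuous_id).tendsto 0
      simpa using h1.mono_left nhdsWithin_le_nhds
    · filter_upwards [self_mem_nhdsWithin] with R hR
      exact mul_pos hc hR
  have hmap : Filter.map (fun R : ℝ => 2 * R) (𝓝[>] (0 : ℝ)) = 𝓝[>] (0 : ℝ) := by
    refine le_antisymm (htend 2 two_pos) ?_
    have h2 := htend (1 / 2) (by norm_num)
    have hcomp : (fun R : ℝ => 2 * ((1 / 2) * R)) = id := by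
      funext R; simp only [id_eq]; ring
    calc 𝓝[>] (0 : ℝ)
        = Filter.map (fun R : ℝ => 2 * R) (Filter.map (fun R : ℝ => (1 / 2) * R) (𝓝[>] 0)) := by
          rw [Filter.map_map]
          show 𝓝[>] (0:ℝ) = Filter.map (fun R : ℝ => 2 * ((1 / 2) * R)) (𝓝[>] 0)
          rw [hcomp, Filter.map_id]
      _ ≤ Filter.map (fun R : ℝ => 2 * R) (𝓝[>] 0) := Filter.map_mono h2
  set g : ℝ → ℝ≥0∞ := fun R => porosityGamma A x R / ENNReal.ofReal R with hg_def
  have hgl : Filter.liminf g (𝓝[>] (0 : ℝ)) = 0 := by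
    have : ¬ (0 < Filter.liminf g (𝓝[>] (0 : ℝ))) := hnp
    simpa using not_lt.1 this
  have hgl2 : Filter.liminf (fun S : ℝ => g (2 * S)) (𝓝[>] (0 : ℝ)) = 0 := by
    rw [← hgl]
    conv_rhs => rw [← hmap]
    exact Filter.liminf_comp g (fun S : ℝ => 2 * S) _
  set h : ℝ → ℝ≥0∞ := fun R =>
    porosityGamma ((Subtype.val ⁻¹' A) : Set (closure S)) (⟨x, hx⟩ : closure S) R /
      ENNReal.ofReal R with hh_def
  have hYlt : 0 < Filter.liminf h (𝓝[>] (0 : ℝ)) := hY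
  have hbound : ∀ ε : ℝ≥0, 0 < ε → Filter.liminf h (𝓝[>] (0 : ℝ)) ≤ (ε : ℝ≥0∞) := by
    intro ε hε
    set δ : ℝ≥0∞ := (ε : ℝ≥0∞) / 2 with hδ
    have hδpos : 0 < δ := ENNReal.div_pos (by exact_mod_cast hε.ne') (by norm_num)
    have hfreq : ∃ᶠ T in 𝓝[>] (0 : ℝ), g (2 * T) < δ :=
      frequently_lt_of_liminf_lt (by isBoundedDefault) (by rw [hgl2]; exact hδpos)
    have hfreq2 : ∃ᶠ T in 𝓝[>] (0 : ℝ), h T ≤ (ε : ℝ≥0∞) := by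
      refine (hfreq.and_eventually self_mem_nhdsWithin).mono ?_
      rintro T ⟨hT1, hT2⟩
      have hTpos : (0 : ℝ) < T := hT2
      set d : ℝ≥0∞ := ENNReal.ofReal T with hd
      have hd0 : d ≠ 0 := (ENNReal.ofReal_pos.2 hTpos).ne'
      have hdt : d ≠ ∞ := ENNReal.ofReal_ne_top
      have hd2 : ENNReal.ofReal (2 * T) = 2 * d := by
        rw [ENNReal.ofReal_mul (by norm_num)]
        norm_num
        rfl
      have hγ : porosityGamma A x (2 * T) < δ * (2 * d) := by
        have := hT1
        rw [hg_def] at this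
        simp only at this
        rw [hd2] at this
        exact (ENNReal.div_lt_iff (Or.inl (mul_ne_zero (by norm_num) hd0)) (Or.inl (ENNReal.mul_ne_top ENNReal.ofNat_ne_top hdt))).1 this
      have hle : h T ≤ porosityGamma A x (2 * T) / d :=
        ENNReal.div_le_div_right (key T hTpos) d
      have hfin2 : δ * (2 * d) / d = (ε : ℝ≥0∞) := by
        rw [← mul_assoc, mul_div_assoc, ENNReal.div_self hd0 hdt, mul_one, hδ,
          ENNReal.div_mul_cancel two_ne_zero ENNReal.ofNat_ne_top]
      calc h T ≤ porosityGamma A x (2 * T) / d := hle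
        _ ≤ δ * (2 * d) / d := ENNReal.div_le_div_right hγ.le d
        _ = (ε : ℝ≥0∞) := hfin2
    exact liminf_le_of_frequently_le hfreq2
  have hfin : Filter.liminf h (𝓝[>] (0 : ℝ)) ≤ 0 := by
    refine ENNReal.le_of_forall_pos_le_add fun ε hε _ => ?_
    simpa using hbound ε hε
  exact absurd hYlt (by simp [le_zero_iff.1 hfin])
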